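/- Let $r>1$. Then there is a constant $C_r>0$ such that for every integer $k\ge 2$, $\sum_{q\in\mathbb{N},\ q\nmid Q_k} q^{-r}\le C_r\,k^{-r+1}(\log k)^{-1}$, where $Q_k=\mathrm{lcm}\{q\in\mathbb{N}:1\le q\le k\}$. -/

import Mathlib

open scoped BigOperators ENNReal

noncomputable section

/-- `Q_k = lcm{1,2,…,k}`. -/
def Qlcm (k : ℕ) : ℕ := (Finset.Icc 1 k).lcm id


lemma Qlcm_ne_zero (k : ℕ) : Qlcm k ≠ 0 := by
  intro h
  rw [Qlcm, Finset.lcm_eq_zero_iff] at h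
  obtain ⟨x, hx, hx0⟩ := h
  simp only [Finset.coe_Icc, Finset.mem_Icc, Set.mem_Icc, id_eq] at hx hx0
  omega

lemma exists_primePow_of_not_dvd {k q : ℕ} (hq : 1 ≤ q) (h : ¬ q ∣ Qlcm k) :
    ∃ s : ℕ, IsPrimePow s ∧ k < s ∧ s ∣ q := by
  by_contra hc
  push_neg at hc
  apply h
  rw [← Nat.factorization_le_iff_dvd (by omega) (Qlcm_ne_zero k)]
  intro p
  rcases Nat.eq_zero_or_pos (q.factorization p) with h0 | hpos
  · simp [h0]
  have hp : p.Prime := Nat.prime_of_mem_primeFactors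
    (q.support_factorization ▸ Finsupp.mem_support_iff.mpr hpos.ne')
  have hdvd : p ^ q.factorization p ∣ q := Nat.ordProj_dvd q p
  have hpp : IsPrimePow (p ^ q.factorization p) := ⟨p, _, hp.prime, hpos, rfl⟩
  have hle : p ^ q.factorization p ≤ k := by
    by_contra hgt
    exact absurd (hc _ hpp (by omega)) (by simpa using hdvd)
  have hmem : p ^ q.factorization p ∈ Finset.Icc 1 k :=
    Finset.mem_Icc.mpr ⟨Nat.one_le_iff_ne_zero.mpr (pow_ne_zero _ hp.pos.ne'), hle⟩
  have : p ^ q.factorization p ∣ Qlcm k := Finset.dvd_lcm hmem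
  exact (Nat.Prime.pow_dvd_iff_le_factorization hp (Qlcm_ne_zero k)).mp this

lemma prime_count_le {N : ℕ} (hN : 2 ≤ N) :
    ((((Finset.Ioc N (2*N)).filter Nat.Prime).card : ℝ)) * Real.log N ≤ 2 * Real.log 4 * N := by
  set P := (Finset.Ioc N (2*N)).filter Nat.Prime with hP
  have h1 : N ^ P.card ≤ ∏ p ∈ P, p :=
    Finset.pow_card_le_prod _ _ _ (fun x hx => le_of_lt (Finset.mem_Ioc.mp (Finset.mem_filter.mp hx).1).1)
  have h2 : ∏ p ∈ P, p ∣ primorial (2*N) := by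
    apply Finset.prod_dvd_prod_of_subset
    intro p hp
    have hp' := Finset.mem_filter.mp hp
    exact Finset.mem_filter.mpr ⟨Finset.mem_range.mpr (by
      have := (Finset.mem_Ioc.mp hp'.1).2; omega), hp'.2⟩
  have h3 : (N : ℕ) ^ P.card ≤ 4 ^ (2*N) :=
    le_trans h1 (le_trans (Nat.le_of_dvd (primorial_pos _) h2) (primorial_le_4_pow _))
  have h4 : ((N : ℝ)) ^ P.card ≤ (4:ℝ) ^ (2*N) := by exact_mod_cast h3
  have h5 := Real.log_le_log (by positivity) h4
  rw [Real.log_pow, Real.log_pow] at h5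
  calc (P.card : ℝ) * Real.log N ≤ (2*N : ℕ) * Real.log 4 := h5
    _ = 2 * Real.log 4 * N := by push_cast; ring

lemma rpow_neg_anti {x y : ℝ≥0∞} (h : x ≤ y) {c : ℝ} (hc : 0 ≤ c) :
    y ^ (-c) ≤ x ^ (-c) := by
  rw [ENNReal.rpow_neg, ENNReal.rpow_neg]
  exact ENNReal.inv_le_inv.mpr (ENNReal.rpow_le_rpow h hc)

lemma nat_rpow (n : ℕ) (hn : 0 < n) (c : ℝ) :
    ((n : ℝ≥0∞)) ^ c = ENNReal.ofReal ((n : ℝ) ^ c) := by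
  rw [← ENNReal.ofReal_natCast, ENNReal.ofReal_rpow_of_pos (by exact_mod_cast hn)]

lemma summable_shift {c : ℝ} (hc : c < -1) : Summable (fun m : ℕ => ((m+1 : ℕ) : ℝ) ^ c) :=
  (Real.summable_nat_rpow.2 hc).comp_injective (fun a b h => by omega)

lemma tsum_shift_rpow_eq {c : ℝ} (hc : c < -1) :
    (∑' m : ℕ, ((m+1 : ℕ) : ℝ≥0∞) ^ c) = ENNReal.ofReal (∑' m : ℕ, ((m+1:ℕ):ℝ) ^ c) := by
  rw [ENNReal.ofReal_tsum_of_nonneg (fun m => Real.rpow_nonneg (by positivity) _) (summable_shift hc)]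
  exact tsum_congr fun m => nat_rpow _ (by omega) _

lemma tsum_shift_rpow_ne_top {c : ℝ} (hc : c < -1) :
    (∑' m : ℕ, ((m+1 : ℕ) : ℝ≥0∞) ^ c) ≠ ⊤ := by
  rw [tsum_shift_rpow_eq hc]; exact ENNReal.ofReal_ne_top

lemma stepB (r : ℝ) (hr : 1 < r) (k : ℕ) (hk : 2 ≤ k) :
    (∑' q : ℕ, if 1 ≤ q ∧ ¬ q ∣ Qlcm k then ((q : ℝ≥0∞)) ^ (-r) else 0)
      ≤ (∑' s : ℕ, if IsPrimePow s ∧ k < s then ((s : ℝ≥0∞)) ^ (-r) else 0) *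
        (∑' m : ℕ, ((m+1 : ℕ) : ℝ≥0∞) ^ (-r)) := by
  classical
  set Z := ∑' m : ℕ, ((m+1 : ℕ) : ℝ≥0∞) ^ (-r) with hZ
  set g : ℕ → ℕ → ℝ≥0∞ := fun s q =>
    if 1 ≤ q ∧ IsPrimePow s ∧ k < s ∧ s ∣ q then ((q : ℝ≥0∞)) ^ (-r) else 0 with hg
  have step1 : (∑' q : ℕ, if 1 ≤ q ∧ ¬ q ∣ Qlcm k then ((q : ℝ≥0∞)) ^ (-r) else 0)
      ≤ ∑' q : ℕ, ∑' s : ℕ, g s q := by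
    apply ENNReal.tsum_le_tsum
    intro q
    split_ifs with hq
    · obtain ⟨s, hs1, hs2, hs3⟩ := exists_primePow_of_not_dvd hq.1 hq.2
      calc ((q : ℝ≥0∞)) ^ (-r) = g s q := by simp [hg, hq.1, hs1, hs2, hs3]
        _ ≤ _ := ENNReal.le_tsum s
    · exact zero_le
  have step2 : ∀ s : ℕ, (∑' q : ℕ, g s q)
      = (if IsPrimePow s ∧ k < s then ((s : ℝ≥0∞)) ^ (-r) else 0) * Z := by
    intro s
    split_ifs with hs
    · have hs0 : 0 < s := lt_of_le_of_lt (Nat.zero_le k) hs.2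
      have hinj : Function.Injective (fun m : ℕ => s * (m+1)) := by
        intro a b hab
        simp only at hab
        have := Nat.eq_of_mul_eq_mul_left hs0 hab
        omega
      have hsupp : Function.support (g s) ⊆ Set.range (fun m : ℕ => s * (m+1)) := by
        intro q hq
        rw [Function.mem_support, hg] at hq
        simp only [ne_eq, ite_eq_right_iff, not_forall] at hq
        obtain ⟨⟨hq1, _, _, m, rfl⟩, -⟩ := hq
        have hm : m ≠ 0 := by rintro rfl; simp at hq1
        exact ⟨m - 1, by simp only; congr 1; omega⟩
      have := Function.Injective.tsum_eq hinj hsupp (f := g s)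
      rw [← this]
      have : ∀ m : ℕ, g s (s * (m+1)) = ((s : ℝ≥0∞)) ^ (-r) * ((m+1 : ℕ) : ℝ≥0∞) ^ (-r) := by
        intro m
        have hcond : 1 ≤ s * (m+1) ∧ IsPrimePow s ∧ k < s ∧ s ∣ s*(m+1) :=
          ⟨Nat.one_le_iff_ne_zero.2 (Nat.mul_ne_zero hs0.ne' (Nat.succ_ne_zero m)),
            hs.1, hs.2, dvd_mul_right s (m+1)⟩
        rw [hg]
        simp only [if_pos hcond]
        rw [Nat.cast_mul, ENNReal.mul_rpow_of_ne_zero (by exact_mod_cast hs0.ne')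
          (by exact_mod_cast (Nat.succ_ne_zero m))]
      rw [tsum_congr this, ENNReal.tsum_mul_left]
    · have : ∀ q, g s q = 0 := by
        intro q; rw [hg]
        simp only [ite_eq_right_iff]
        intro hcon
        exact absurd ⟨hcon.2.1, hcon.2.2.1⟩ hs
      simp [tsum_congr this]
  calc _ ≤ ∑' q : ℕ, ∑' s : ℕ, g s q := step1
    _ = ∑' s : ℕ, ∑' q : ℕ, g s q := ENNReal.tsum_comm
    _ = ∑' s : ℕ, (if IsPrimePow s ∧ k < s then ((s : ℝ≥0∞)) ^ (-r) else 0) * Z :=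
        tsum_congr step2
    _ = _ := ENNReal.tsum_mul_right

lemma stepC (r : ℝ) (k : ℕ) :
    (∑' s : ℕ, if IsPrimePow s ∧ k < s then ((s : ℝ≥0∞)) ^ (-r) else 0)
      ≤ (∑' p : ℕ, if p.Prime ∧ k < p then ((p : ℝ≥0∞)) ^ (-r) else 0)
        + ∑' ba : ℕ × ℕ, if 2 ≤ ba.1 ∧ 2 ≤ ba.2 ∧ k < ba.1 ^ ba.2
            then (((ba.1 ^ ba.2 : ℕ) : ℝ≥0∞)) ^ (-r) else 0 := by
  classical
  have hsplit : ∀ s : ℕ, (if IsPrimePow s ∧ k < s then ((s : ℝ≥0∞)) ^ (-r) else 0)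
      ≤ (if s.Prime ∧ k < s then ((s : ℝ≥0∞)) ^ (-r) else 0)
        + (if (∃ ba : ℕ × ℕ, 2 ≤ ba.1 ∧ 2 ≤ ba.2 ∧ ba.1 ^ ba.2 = s) ∧ k < s
            then ((s : ℝ≥0∞)) ^ (-r) else 0) := by
    intro s
    by_cases hs : IsPrimePow s ∧ k < s
    · rw [if_pos hs]
      obtain ⟨⟨p, a, hp, ha, rfl⟩, hks⟩ := hs
      rcases eq_or_lt_of_le (show 1 ≤ a from ha) with h1 | h2
      · have hpa : (p ^ a).Prime := by
          rw [← h1]; simpa using hp.nat_prime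
        exact le_add_right (le_of_eq (if_pos ⟨hpa, hks⟩).symm)
      · exact le_add_left (le_of_eq (if_pos ⟨⟨(p, a), hp.nat_prime.two_le, h2, rfl⟩, hks⟩).symm)
    · rw [if_neg hs]; exact zero_le
  refine le_trans (ENNReal.tsum_le_tsum hsplit) ?_
  rw [ENNReal.tsum_add]
  refine add_le_add le_rfl ?_
  have hex : ∀ s : ℕ,
      ((∃ ba : ℕ × ℕ, 2 ≤ ba.1 ∧ 2 ≤ ba.2 ∧ ba.1 ^ ba.2 = s) ∧ k < s) →
      ∃ ba : ℕ × ℕ, 2 ≤ ba.1 ∧ 2 ≤ ba.2 ∧ ba.1 ^ ba.2 = s := fun s h => h.1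
  set e : ℕ → ℕ × ℕ := fun s =>
    if h : ∃ ba : ℕ × ℕ, 2 ≤ ba.1 ∧ 2 ≤ ba.2 ∧ ba.1 ^ ba.2 = s then h.choose else (s, 0) with he
  have hechoose : ∀ s (h : ∃ ba : ℕ × ℕ, 2 ≤ ba.1 ∧ 2 ≤ ba.2 ∧ ba.1 ^ ba.2 = s),
      e s = h.choose := fun s h => dif_pos h
  have henot : ∀ s, ¬ (∃ ba : ℕ × ℕ, 2 ≤ ba.1 ∧ 2 ≤ ba.2 ∧ ba.1 ^ ba.2 = s) →
      e s = (s, 0) := fun s h => dif_neg h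
  have hinj : Function.Injective e := by
    intro s1 s2 h12
    by_cases h1 : ∃ ba : ℕ × ℕ, 2 ≤ ba.1 ∧ 2 ≤ ba.2 ∧ ba.1 ^ ba.2 = s1 <;>
      by_cases h2 : ∃ ba : ℕ × ℕ, 2 ≤ ba.1 ∧ 2 ≤ ba.2 ∧ ba.1 ^ ba.2 = s2
    · rw [hechoose s1 h1, hechoose s2 h2] at h12
      rw [← h1.choose_spec.2.2, ← h2.choose_spec.2.2, h12]
    · rw [hechoose s1 h1, henot s2 h2] at h12
      have := h1.choose_spec.2.1
      rw [h12] at this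
      simp at this
    · rw [henot s1 h1, hechoose s2 h2] at h12
      have := h2.choose_spec.2.1
      rw [← h12] at this
      simp at this
    · rw [henot s1 h1, henot s2 h2] at h12
      exact (Prod.mk.injEq _ _ _ _ ▸ h12).1
  refine ENNReal.summable.tsum_le_tsum_of_inj e hinj (fun c _ => zero_le) ?_ ENNReal.summable
  intro s
  by_cases hcond : (∃ ba : ℕ × ℕ, 2 ≤ ba.1 ∧ 2 ≤ ba.2 ∧ ba.1 ^ ba.2 = s) ∧ k < s
  · rw [if_pos hcond, hechoose s hcond.1]
    obtain ⟨hb, ha, hba⟩ := hcond.1.choose_spec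
    rw [if_pos ⟨hb, ha, by rw [hba]; exact hcond.2⟩, hba]
  · rw [if_neg hcond]
    exact zero_le

lemma stepT2 (r : ℝ) (hr : 1 < r) : ∃ C2 : ℝ, 0 ≤ C2 ∧ ∀ k : ℕ, 2 ≤ k →
    (∑' ba : ℕ × ℕ, if 2 ≤ ba.1 ∧ 2 ≤ ba.2 ∧ k < ba.1 ^ ba.2
        then (((ba.1 ^ ba.2 : ℕ) : ℝ≥0∞)) ^ (-r) else 0)
      ≤ ENNReal.ofReal (C2 * (k : ℝ) ^ (1 - r) / Real.log k) := by
  classical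
  set t : ℝ := min ((r - 1)/2) 4⁻¹ with ht
  have ht0 : 0 < t := lt_min (by linarith) (by norm_num)
  have ht4 : t ≤ 4⁻¹ := min_le_right _ _
  set w : ℝ≥0∞ := (2 : ℝ≥0∞) ^ (-(1 - t)) with hw
  have hw1 : w < 1 :=
    ENNReal.rpow_lt_one_of_one_lt_of_neg (by norm_num) (by rw [neg_lt, neg_zero]; linarith)
  set h1 : ℕ → ℝ≥0∞ := fun b => if 2 ≤ b then (b : ℝ≥0∞) ^ (-(3/2 : ℝ)) else 0 with hh1
  set h2 : ℕ → ℝ≥0∞ := fun a => if 2 ≤ a then w ^ (a - 2) else 0 with hh2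
  -- the key pointwise bound
  have key : ∀ b a : ℕ, 2 ≤ b → 2 ≤ a →
      (((b ^ a : ℕ) : ℝ≥0∞)) ^ (-(1 - t)) ≤ (b : ℝ≥0∞) ^ (-(3/2 : ℝ)) * w ^ (a - 2) := by
    intro b a hb ha
    obtain ⟨a', rfl⟩ : ∃ a', a = a' + 2 := ⟨a - 2, by omega⟩
    have hb0 : ((b : ℝ≥0∞)) ≠ 0 := by exact_mod_cast (by omega : b ≠ 0)
    have hb2 : (2 : ℝ≥0∞) ≤ (b : ℝ≥0∞) := by exact_mod_cast hb
    rw [Nat.cast_pow, pow_add,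
      ENNReal.mul_rpow_of_ne_zero (pow_ne_zero _ hb0) (pow_ne_zero _ hb0)]
    have bd1 : ((b : ℝ≥0∞) ^ a') ^ (-(1 - t)) ≤ w ^ a' := by
      have h1' : ((2 : ℝ≥0∞) ^ a') ^ (-(1 - t)) = w ^ a' := by
        rw [hw, ← ENNReal.rpow_natCast (2 : ℝ≥0∞) a', ← ENNReal.rpow_mul,
          ← ENNReal.rpow_natCast ((2:ℝ≥0∞) ^ (-(1 - t))) a', ← ENNReal.rpow_mul]
        ring_nf
      rw [← h1']
      exact rpow_neg_anti (pow_le_pow_left' hb2 a') (by linarith)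
    have bd2 : ((b : ℝ≥0∞) ^ 2) ^ (-(1 - t)) ≤ (b : ℝ≥0∞) ^ (-(3/2 : ℝ)) := by
      rw [← ENNReal.rpow_natCast (b : ℝ≥0∞) 2, ← ENNReal.rpow_mul]
      refine ENNReal.rpow_le_rpow_of_exponent_le (le_trans (by norm_num) hb2) ?_
      push_cast
      nlinarith [ht4]
    calc ((b : ℝ≥0∞) ^ a') ^ (-(1-t)) * ((b : ℝ≥0∞) ^ 2) ^ (-(1-t))
        ≤ w ^ a' * (b : ℝ≥0∞) ^ (-(3/2 : ℝ)) := mul_le_mul' bd1 bd2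
      _ = (b : ℝ≥0∞) ^ (-(3/2 : ℝ)) * w ^ (a' + 2 - 2) := by rw [mul_comm]; norm_num
  -- the sums of h1 and h2 are finite
  have hsum2 : (∑' a : ℕ, h2 a) = (1 - w)⁻¹ := by
    have hinj : Function.Injective (fun a' : ℕ => a' + 2) := fun a b h => by simpa using h
    have hsupp : Function.support h2 ⊆ Set.range (fun a' : ℕ => a' + 2) := by
      intro a ha
      rw [Function.mem_support, hh2] at ha
      simp only [ne_eq, ite_eq_right_iff, not_forall] at ha
      obtain ⟨ha2, -⟩ := ha
      exact ⟨a - 2, by show a - 2 + 2 = a; omega⟩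
    rw [← Function.Injective.tsum_eq hinj hsupp]
    have : ∀ a' : ℕ, h2 (a' + 2) = w ^ a' := by
      intro a'
      simp only [hh2]
      rw [if_pos (by omega : 2 ≤ a' + 2)]
      congr 1
    rw [tsum_congr this, ENNReal.tsum_geometric]
  have hsum2top : (∑' a : ℕ, h2 a) ≠ ⊤ := by
    rw [hsum2]
    rw [ENNReal.inv_ne_top]
    simp [tsub_eq_zero_iff_le, hw1.not_ge]
  have hsum1top : (∑' b : ℕ, h1 b) ≠ ⊤ := by
    have hinj : Function.Injective (fun b' : ℕ => b' + 2) := fun a b h => by simpa using h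
    have hsupp : Function.support h1 ⊆ Set.range (fun b' : ℕ => b' + 2) := by
      intro b hb
      rw [Function.mem_support, hh1] at hb
      simp only [ne_eq, ite_eq_right_iff, not_forall] at hb
      obtain ⟨hb2, -⟩ := hb
      exact ⟨b - 2, by show b - 2 + 2 = b; omega⟩
    rw [← Function.Injective.tsum_eq hinj hsupp]
    refine ne_top_of_le_ne_top (tsum_shift_rpow_ne_top (by norm_num : -(3/2:ℝ) < -1)) ?_
    apply ENNReal.tsum_le_tsum
    intro b
    simp only [hh1]
    rw [if_pos (by omega : 2 ≤ b + 2)]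
    exact rpow_neg_anti (by exact_mod_cast (by omega : b + 1 ≤ b + 2)) (by norm_num)
  set V : ℝ≥0∞ := (∑' b : ℕ, h1 b) * (∑' a : ℕ, h2 a) with hV
  have hVtop : V ≠ ⊤ := ENNReal.mul_ne_top hsum1top hsum2top
  refine ⟨V.toReal / t, by positivity, fun k hk => ?_⟩
  have hk0 : (0:ℝ) < k := by positivity
  have hkl : 0 < Real.log k := Real.log_pos (by exact_mod_cast hk)
  -- main chain
  have main : (∑' ba : ℕ × ℕ, if 2 ≤ ba.1 ∧ 2 ≤ ba.2 ∧ k < ba.1 ^ ba.2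
        then (((ba.1 ^ ba.2 : ℕ) : ℝ≥0∞)) ^ (-r) else 0)
      ≤ (k : ℝ≥0∞) ^ (-(r - 1 + t)) * V := by
    have term : ∀ ba : ℕ × ℕ, (if 2 ≤ ba.1 ∧ 2 ≤ ba.2 ∧ k < ba.1 ^ ba.2
        then (((ba.1 ^ ba.2 : ℕ) : ℝ≥0∞)) ^ (-r) else 0)
        ≤ (k : ℝ≥0∞) ^ (-(r - 1 + t)) * (h1 ba.1 * h2 ba.2) := by
      rintro ⟨b, a⟩
      by_cases hc : 2 ≤ b ∧ 2 ≤ a ∧ k < b ^ a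
      · rw [if_pos hc]
        obtain ⟨hb, ha, hk'⟩ := hc
        have hx0 : (((b ^ a : ℕ) : ℝ≥0∞)) ≠ 0 := by
          exact_mod_cast (pow_ne_zero a (by omega : b ≠ 0))
        have hxt : (((b ^ a : ℕ) : ℝ≥0∞)) ≠ ⊤ := ENNReal.natCast_ne_top _
        have hsplit : (-r : ℝ) = (-(r - 1 + t)) + (-(1 - t)) := by ring
        rw [hsplit, ENNReal.rpow_add _ _ hx0 hxt]
        refine mul_le_mul' (rpow_neg_anti (by exact_mod_cast hk'.le) (by linarith)) ?_
        calc (((b ^ a : ℕ) : ℝ≥0∞)) ^ (-(1 - t)) ≤ (b : ℝ≥0∞) ^ (-(3/2:ℝ)) * w ^ (a - 2) :=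
              key b a hb ha
          _ = h1 b * h2 a := by rw [hh1, hh2]; simp [if_pos hb, if_pos ha]
      · rw [if_neg hc]; exact zero_le
    calc _ ≤ ∑' ba : ℕ × ℕ, (k : ℝ≥0∞) ^ (-(r - 1 + t)) * (h1 ba.1 * h2 ba.2) :=
          ENNReal.tsum_le_tsum term
      _ = (k : ℝ≥0∞) ^ (-(r - 1 + t)) * ∑' ba : ℕ × ℕ, h1 ba.1 * h2 ba.2 :=
          ENNReal.tsum_mul_left
      _ = (k : ℝ≥0∞) ^ (-(r - 1 + t)) * V := by
          rw [hV, ENNReal.tsum_prod (f := fun b a => h1 b * h2 a)]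
          congr 1
          rw [← ENNReal.tsum_mul_right]
          exact tsum_congr fun b => ENNReal.tsum_mul_left
  refine le_trans main ?_
  have step0 : (k : ℝ≥0∞) ^ (-(r - 1 + t)) * V
      = ENNReal.ofReal ((k:ℝ) ^ (-(r - 1 + t)) * V.toReal) := by
    rw [ENNReal.ofReal_mul (Real.rpow_nonneg hk0.le _), ← nat_rpow k (by omega) _,
      ENNReal.ofReal_toReal hVtop]
  rw [step0]
  apply ENNReal.ofReal_le_ofReal
  -- real arithmetic
  have e1 : (k:ℝ) ^ (-(r - 1 + t)) = (k:ℝ) ^ (1 - r) * (k:ℝ) ^ (-t) := by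
    rw [← Real.rpow_add hk0]
    ring_nf
  have e2 : (k:ℝ) ^ (-t) ≤ (t * Real.log k)⁻¹ := by
    rw [Real.rpow_neg hk0.le]
    refine inv_anti₀ (by positivity) ?_
    have := Real.log_le_rpow_div hk0.le ht0
    calc t * Real.log k ≤ t * ((k:ℝ) ^ t / t) := by nlinarith
      _ = (k:ℝ) ^ t := by field_simp
  calc (k:ℝ) ^ (-(r - 1 + t)) * V.toReal
      ≤ ((k:ℝ) ^ (1 - r) * (t * Real.log k)⁻¹) * V.toReal := by
        rw [e1]
        have h3 : (0:ℝ) ≤ (k:ℝ) ^ (1 - r) := Real.rpow_nonneg hk0.le _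
        have h4 : (0:ℝ) ≤ V.toReal := ENNReal.toReal_nonneg
        exact mul_le_mul_of_nonneg_right (mul_le_mul_of_nonneg_left e2 h3) h4
    _ = V.toReal / t * (k:ℝ) ^ (1 - r) / Real.log k := by
        field_simp

lemma stepT1 (r : ℝ) (hr : 1 < r) : ∃ C1 : ℝ, 0 ≤ C1 ∧ ∀ k : ℕ, 2 ≤ k →
    (∑' p : ℕ, if p.Prime ∧ k < p then ((p : ℝ≥0∞)) ^ (-r) else 0)
      ≤ ENNReal.ofReal (C1 * (k : ℝ) ^ (1 - r) / Real.log k) := by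
  classical
  set w : ℝ := (2 : ℝ) ^ (1 - r) with hw
  have hw0 : 0 ≤ w := Real.rpow_nonneg (by norm_num) _
  have hw1 : w < 1 := Real.rpow_lt_one_of_one_lt_of_neg (by norm_num) (by linarith)
  refine ⟨2 * Real.log 4 * (1 - w)⁻¹,
    mul_nonneg (mul_nonneg (by norm_num) (Real.log_nonneg (by norm_num)))
      (inv_nonneg.mpr (by linarith)), fun k hk => ?_⟩
  have hk0 : (0:ℝ) < k := by positivity
  have hkl : 0 < Real.log k := Real.log_pos (by exact_mod_cast hk)
  set K : ℝ := (k : ℝ) ^ (1 - r) / Real.log k with hK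
  have hK0 : 0 ≤ K := div_nonneg (Real.rpow_nonneg hk0.le _) hkl.le
  set B : ℕ → ℕ → ℝ≥0∞ := fun j p =>
    if p.Prime ∧ 2^j * k < p ∧ p ≤ 2 * (2^j * k) then ((p : ℝ≥0∞)) ^ (-r) else 0 with hB
  have claim1 : ∀ p : ℕ, (if p.Prime ∧ k < p then ((p : ℝ≥0∞)) ^ (-r) else 0)
      ≤ ∑' j : ℕ, B j p := by
    intro p
    by_cases hp : p.Prime ∧ k < p
    · rw [if_pos hp]
      set P : ℕ → Prop := fun j => 2^j * k < p with hP
      have h0 : P 0 := by simpa [hP] using hp.2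
      set j0 := Nat.findGreatest P p with hj0
      have hP0 : P j0 := Nat.findGreatest_spec (Nat.zero_le p) h0
      have hj0lt : j0 < p := by
        rcases lt_or_eq_of_le (Nat.findGreatest_le p (P := P)) with h | h
        · exact h
        · exfalso
          have hPp : P p := by rw [← h]; exact hP0
          have : p < 2^p := Nat.lt_two_pow_self
          have : 2^p ≤ 2^p * k := Nat.le_mul_of_pos_right _ (by omega)
          rw [hP] at hPp
          omega
      have hnot : ¬ P (j0 + 1) :=
        Nat.findGreatest_is_greatest (hj0 ▸ Nat.lt_succ_self j0) hj0lt
      have hnot' : ¬ 2^(j0+1) * k < p := by simpa [hP] using hnot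
      have hle : p ≤ 2 * (2^j0 * k) := by
        have h2 : (2:ℕ)^(j0+1) * k = 2 * (2^j0 * k) := by ring
        omega
      calc ((p : ℝ≥0∞)) ^ (-r) = B j0 p := by rw [hB]; exact (if_pos ⟨hp.1, hP0, hle⟩).symm
        _ ≤ ∑' j : ℕ, B j p := ENNReal.le_tsum j0
    · rw [if_neg hp]; exact zero_le
  have claim2 : ∀ j : ℕ, (∑' p : ℕ, B j p)
      ≤ ENNReal.ofReal (2 * Real.log 4 * K * w ^ j) := by
    intro j
    set N : ℕ := 2^j * k with hN
    have hNk : k ≤ N := Nat.le_mul_of_pos_left _ (Nat.pow_pos (n := j) (by norm_num))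
    have hN2 : 2 ≤ N := le_trans hk hNk
    have hN0 : (0:ℝ) < N := by positivity
    set sj := (Finset.Ioc N (2*N)).filter Nat.Prime with hsj
    have h_eq : (∑' p : ℕ, B j p) = ∑ p ∈ sj, B j p := by
      apply tsum_eq_sum
      intro p hp
      simp only [hB]
      apply if_neg
      rintro ⟨hp1, hp2, hp3⟩
      exact hp (Finset.mem_filter.mpr ⟨Finset.mem_Ioc.mpr ⟨hp2, hp3⟩, hp1⟩)
    have h_le : ∑ p ∈ sj, B j p ≤ sj.card • ((N : ℝ≥0∞) ^ (-r)) := by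
      apply Finset.sum_le_card_nsmul
      intro p hp
      simp only [hB]
      split_ifs with hc
      · exact rpow_neg_anti (by exact_mod_cast hc.2.1.le) (by linarith)
      · exact zero_le
    have h_cast : sj.card • ((N : ℝ≥0∞) ^ (-r))
        = ENNReal.ofReal ((sj.card : ℝ) * ((N:ℕ):ℝ) ^ (-r)) := by
      rw [nsmul_eq_mul, nat_rpow N (by omega), ← ENNReal.ofReal_natCast sj.card,
        ← ENNReal.ofReal_mul (by positivity)]
    rw [h_eq]
    refine le_trans h_le ?_
    rw [h_cast]
    apply ENNReal.ofReal_le_ofReal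
    have hcard : (sj.card : ℝ) ≤ 2 * Real.log 4 * N / Real.log k := by
      rw [le_div_iff₀ hkl]
      calc (sj.card : ℝ) * Real.log k ≤ (sj.card : ℝ) * Real.log N :=
            mul_le_mul_of_nonneg_left (Real.log_le_log hk0 (by exact_mod_cast hNk))
              (by positivity)
        _ ≤ 2 * Real.log 4 * N := prime_count_le hN2
    have eN : ((N:ℕ):ℝ) * ((N:ℕ):ℝ) ^ (-r) = ((N:ℕ):ℝ) ^ (1 - r) := by
      rw [show (1:ℝ) - r = 1 + (-r) by ring, Real.rpow_add hN0, Real.rpow_one]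
    have eN2 : ((N:ℕ):ℝ) ^ (1 - r) = w ^ j * (k:ℝ) ^ (1 - r) := by
      have : ((N:ℕ):ℝ) = ((2:ℝ)^j) * (k:ℝ) := by rw [hN]; push_cast; ring
      rw [this, Real.mul_rpow (by positivity) hk0.le]
      congr 1
      rw [hw, ← Real.rpow_natCast (2:ℝ) j, ← Real.rpow_mul (by norm_num),
        ← Real.rpow_natCast ((2:ℝ) ^ (1-r)) j, ← Real.rpow_mul (by norm_num)]
      ring_nf
    calc (sj.card : ℝ) * ((N:ℕ):ℝ) ^ (-r)
        ≤ (2 * Real.log 4 * N / Real.log k) * ((N:ℕ):ℝ) ^ (-r) :=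
          mul_le_mul_of_nonneg_right hcard (Real.rpow_nonneg hN0.le _)
      _ = 2 * Real.log 4 * (((N:ℕ):ℝ) * ((N:ℕ):ℝ) ^ (-r)) / Real.log k := by ring
      _ = 2 * Real.log 4 * ((N:ℕ):ℝ) ^ (1 - r) / Real.log k := by rw [eN]
      _ = 2 * Real.log 4 * K * w ^ j := by rw [eN2, hK]; ring
  calc (∑' p : ℕ, if p.Prime ∧ k < p then ((p : ℝ≥0∞)) ^ (-r) else 0)
      ≤ ∑' p : ℕ, ∑' j : ℕ, B j p := ENNReal.tsum_le_tsum claim1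
    _ = ∑' j : ℕ, ∑' p : ℕ, B j p := ENNReal.tsum_comm
    _ ≤ ∑' j : ℕ, ENNReal.ofReal (2 * Real.log 4 * K * w ^ j) :=
        ENNReal.tsum_le_tsum claim2
    _ = ENNReal.ofReal (∑' j : ℕ, 2 * Real.log 4 * K * w ^ j) :=
        (ENNReal.ofReal_tsum_of_nonneg (fun j => by positivity)
          ((summable_geometric_of_lt_one hw0 hw1).mul_left _)).symm
    _ = ENNReal.ofReal (2 * Real.log 4 * (1 - w)⁻¹ * (k:ℝ) ^ (1 - r) / Real.log k) := by
        rw [tsum_mul_left, tsum_geometric_of_lt_one hw0 hw1, hK]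
        ring_nf

/-- **Lemma 2**: for `r > 1` there is a constant `C_r > 0` such that for every `k ≥ 2`,
`∑_{q ∤ Q_k} q^{-r} ≤ C_r k^{-r+1} (log k)⁻¹`, the sum running over positive integers
`q` not dividing `Q_k`. -/
theorem sum_over_nondivisors (r : ℝ) (hr : 1 < r) :
    ∃ C : ℝ, 0 < C ∧ ∀ k : ℕ, 2 ≤ k →
      (∑' q : ℕ, if 1 ≤ q ∧ ¬ q ∣ Qlcm k then ((q : ℝ≥0∞)) ^ (-r) else 0)
        ≤ ENNReal.ofReal (C * (k : ℝ) ^ (-r + 1) / Real.log k) := by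
  obtain ⟨C1, hC1, hT1⟩ := stepT1 r hr
  obtain ⟨C2, hC2, hT2⟩ := stepT2 r hr
  set Zr : ℝ := ∑' m : ℕ, ((m+1:ℕ):ℝ) ^ (-r) with hZr
  have hZr0 : 0 ≤ Zr := tsum_nonneg (fun m => Real.rpow_nonneg (by positivity) _)
  refine ⟨(C1 + C2) * Zr + 1, by positivity, fun k hk => ?_⟩
  have hk0 : (0:ℝ) < k := by positivity
  have hkl : 0 < Real.log k := Real.log_pos (by exact_mod_cast hk)
  have hZ : (∑' m : ℕ, ((m+1 : ℕ) : ℝ≥0∞) ^ (-r)) = ENNReal.ofReal Zr :=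
    tsum_shift_rpow_eq (by linarith)
  have ha : 0 ≤ C1 * (k:ℝ) ^ (1-r) / Real.log k :=
    div_nonneg (mul_nonneg hC1 (Real.rpow_nonneg hk0.le _)) hkl.le
  have hb : 0 ≤ C2 * (k:ℝ) ^ (1-r) / Real.log k :=
    div_nonneg (mul_nonneg hC2 (Real.rpow_nonneg hk0.le _)) hkl.le
  calc (∑' q : ℕ, if 1 ≤ q ∧ ¬ q ∣ Qlcm k then ((q : ℝ≥0∞)) ^ (-r) else 0)
      ≤ (∑' s : ℕ, if IsPrimePow s ∧ k < s then ((s : ℝ≥0∞)) ^ (-r) else 0) *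
        (∑' m : ℕ, ((m+1 : ℕ) : ℝ≥0∞) ^ (-r)) := stepB r hr k hk
    _ ≤ ((∑' p : ℕ, if p.Prime ∧ k < p then ((p : ℝ≥0∞)) ^ (-r) else 0)
          + ∑' ba : ℕ × ℕ, if 2 ≤ ba.1 ∧ 2 ≤ ba.2 ∧ k < ba.1 ^ ba.2
              then (((ba.1 ^ ba.2 : ℕ) : ℝ≥0∞)) ^ (-r) else 0) *
        (∑' m : ℕ, ((m+1 : ℕ) : ℝ≥0∞) ^ (-r)) := mul_le_mul_left (stepC r k) _
    _ ≤ (ENNReal.ofReal (C1 * (k:ℝ) ^ (1-r) / Real.log k)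
          + ENNReal.ofReal (C2 * (k:ℝ) ^ (1-r) / Real.log k)) * ENNReal.ofReal Zr := by
        rw [hZ]
        exact mul_le_mul_left (add_le_add (hT1 k hk) (hT2 k hk)) _
    _ = ENNReal.ofReal (((C1 + C2) * Zr) * ((k:ℝ) ^ (1-r) / Real.log k)) := by
        rw [← ENNReal.ofReal_add ha hb, ← ENNReal.ofReal_mul (add_nonneg ha hb)]
        congr 1
        ring
    _ ≤ ENNReal.ofReal (((C1 + C2) * Zr + 1) * (k:ℝ) ^ (-r+1) / Real.log k) := by
        apply ENNReal.ofReal_le_ofReal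
        rw [show (-r+1 : ℝ) = 1 - r by ring]
        rw [show ((C1 + C2) * Zr) * ((k:ℝ) ^ (1-r) / Real.log k)
          = ((C1 + C2) * Zr) * (k:ℝ) ^ (1-r) / Real.log k by ring]
        gcongr
        linarith
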